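/- Let F ∈ C¹(Δ) be continuously differentiable on the unit disk such that |∇F| dxdy is a vanishing Carleson measure on Δ and lim_{r→1} F(re^{iθ}) = f(e^{iθ}) exists for almost every θ. Then f ∈ VMO(S). -/

import Mathlib

open MeasureTheory Real Set Filter

/-- Mean of `f` over the arc `[a, a+h]` (functions on the circle are viewed as
`2π`-periodic functions on `ℝ`). -/
noncomputable def circAvg (f : ℝ → ℝ) (a h : ℝ) : ℝ := (∫ θ in a..(a + h), f θ) / h

/-- Mean oscillation of `f` over the arc `[a, a+h]`. -/
noncomputable def circOsc (f : ℝ → ℝ) (a h : ℝ) : ℝ :=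
  (∫ θ in a..(a + h), |f θ - circAvg f a h|) / h

/-- `f ∈ BMO(𝕊)`. -/
def IsBMOS (f : ℝ → ℝ) : Prop :=
  Function.Periodic f (2 * π) ∧ LocallyIntegrable f ∧
    ∃ C, ∀ a h, 0 < h → h ≤ 2 * π → circOsc f a h ≤ C

/-- `f ∈ VMO(𝕊)`. -/
def IsVMOS (f : ℝ → ℝ) : Prop :=
  IsBMOS f ∧ ∀ ε > 0, ∃ δ > 0, ∀ a h, 0 < h → h ≤ δ → circOsc f a h ≤ ε

/-- Poisson kernel of the unit disk: `P_z(e^{iθ}) = (1/2π)(1-|z|²)/|1 - e^{-iθ} z|²`. -/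
noncomputable def poissonDisk (z : ℂ) (θ : ℝ) : ℝ :=
  (1 - ‖z‖ ^ 2) / (2 * π * ‖1 - Complex.exp (-(θ : ℂ) * Complex.I) * z‖ ^ 2)

/-- Balayage (sweep) of a measure `μ` on the disk. -/
noncomputable def balayage (μ : Measure ℂ) (θ : ℝ) : ℝ := ∫ z, poissonDisk z θ ∂μ

/-- Carleson square over the arc `[a, a+h]`. -/
def carlesonBox (a h : ℝ) : Set ℂ :=
  (fun p : ℝ × ℝ => (p.1 : ℂ) * Complex.exp ((p.2 : ℂ) * Complex.I)) ''
    (Set.Ioo (1 - h / (2 * π)) 1 ×ˢ Set.Icc a (a + h))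

/-- `μ` is a Carleson measure with Carleson constant `A`. -/
def IsCarleson (μ : Measure ℂ) (A : ℝ) : Prop :=
  ∀ a h, 0 < h → h ≤ 2 * π → μ (carlesonBox a h) ≤ ENNReal.ofReal (A * h)


/-- `μ` is a vanishing Carleson measure. -/
def IsVanishingCarleson (μ : Measure ℂ) : Prop :=
  (∃ A, IsCarleson μ A) ∧
    ∀ ε > (0 : ℝ), ∃ δ > (0 : ℝ), ∀ a h, 0 < h → h ≤ δ →
      μ (carlesonBox a h) ≤ ENNReal.ofReal (ε * h)

/-- The measure `|∇F| dxdy` on the unit disk. -/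
noncomputable def gradMeasure (F : ℂ → ℝ) : Measure ℂ :=
  (volume.restrict (Metric.ball (0 : ℂ) 1)).withDensity
    fun z => ENNReal.ofReal ‖fderiv ℝ F z‖


open scoped ENNReal

noncomputable def bTm (p : ℝ × ℝ) : ℂ := (p.1 : ℂ) * Complex.exp ((p.2 : ℂ) * Complex.I)

lemma bTm_abs (p : ℝ × ℝ) : ‖bTm p‖ = |p.1| := by
  simp [bTm, Complex.norm_exp_ofReal_mul_I]

lemma bTm_mem_ball {p : ℝ × ℝ} (hp : |p.1| < 1) : bTm p ∈ Metric.ball (0:ℂ) 1 := by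
  rw [Metric.mem_ball, dist_zero_right, bTm_abs]; exact hp

lemma cont_bTm : Continuous bTm := by
  exact (Complex.continuous_ofReal.comp continuous_fst).mul
    (Complex.continuous_exp.comp ((Complex.continuous_ofReal.comp continuous_snd).mul
      continuous_const))

lemma e_symm_polar (p : ℝ × ℝ) :
    Complex.measurableEquivRealProd.symm (polarCoord.symm p) = bTm p := by
  have h : Complex.measurableEquivRealProd.symm (polarCoord.symm p)
      = Complex.polarCoord.symm p := rfl
  rw [h, Complex.polarCoord_symm_apply, bTm, Complex.exp_mul_I]
  simp [Complex.ofReal_cos, Complex.ofReal_sin]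

lemma meas_d (F : ℂ → ℝ) : Measurable fun z => ENNReal.ofReal ‖fderiv ℝ F z‖ :=
  (measurable_fderiv ℝ F).norm.ennreal_ofReal

lemma bTm_injOn {a h ρ₁ : ℝ} (hρ : 0 < ρ₁) (hh2 : h ≤ 2 * π) :
    InjOn bTm (Ioo ρ₁ 1 ×ˢ Ico a (a + h)) := by
  have hπ := Real.pi_pos
  rintro ⟨r₁, θ₁⟩ ⟨hr₁, hθ₁⟩ ⟨r₂, θ₂⟩ ⟨hr₂, hθ₂⟩ heq
  simp only [mem_Ioo, mem_Ico] at hr₁ hθ₁ hr₂ hθ₂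
  have hr1p : 0 < r₁ := hρ.trans hr₁.1
  have hr2p : 0 < r₂ := hρ.trans hr₂.1
  have habs := congrArg (‖·‖) heq
  rw [bTm_abs, bTm_abs] at habs
  simp only at habs
  have hrr : r₁ = r₂ := by rwa [abs_of_pos hr1p, abs_of_pos hr2p] at habs
  subst hrr
  have hr1c : (r₁ : ℂ) ≠ 0 := by exact_mod_cast hr1p.ne'
  have hexp : Complex.exp ((θ₁:ℂ) * Complex.I) = Complex.exp ((θ₂:ℂ) * Complex.I) :=
    mul_left_cancel₀ hr1c heq
  rw [Complex.exp_eq_exp_iff_exists_int] at hexp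
  obtain ⟨n, hn⟩ := hexp
  have him := congrArg Complex.im hn
  simp [Complex.add_im, Complex.mul_im] at him
  -- him : θ₁ = θ₂ + n * (2 * π)  (hopefully)
  have hn0 : n = 0 := by
    by_contra hne
    have h1 : (1:ℝ) ≤ |(n:ℝ)| := by exact_mod_cast Int.one_le_abs (by omega)
    have h2 : |θ₁ - θ₂| < 2 * π := by
      rw [abs_lt]; constructor <;> nlinarith [hθ₁.1, hθ₁.2, hθ₂.1, hθ₂.2]
    have h3 : θ₁ - θ₂ = (n:ℝ) * (2 * π) := by linarith [him]
    rw [h3, abs_mul, abs_of_pos (by linarith : (0:ℝ) < 2*π)] at h2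
    nlinarith
  subst hn0
  simp at him
  simp [him]

lemma lintegral_rect_le (F : ℂ → ℝ) {a h ρ₁ : ℝ}
    (h1 : 1 / 2 ≤ ρ₁) (h2 : 1 - h / (2 * π) ≤ ρ₁) (h3 : ρ₁ < 1) (hh2 : h ≤ 2 * π) :
    ∫⁻ p in Ioo ρ₁ 1 ×ˢ Ico a (a + h), ENNReal.ofReal ‖fderiv ℝ F (bTm p)‖
      ≤ 2 * gradMeasure F (carlesonBox a h) := by
  set d : ℂ → ℝ≥0∞ := fun z => ENNReal.ofReal ‖fderiv ℝ F z‖ with hd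
  have hdm : Measurable d := meas_d F
  set s : Set (ℝ × ℝ) := Ioo ρ₁ 1 ×ˢ Ico a (a + h) with hsdef
  have hs : MeasurableSet s := measurableSet_Ioo.prod measurableSet_Ico
  have hρpos : (0:ℝ) < ρ₁ := lt_of_lt_of_le (by norm_num) h1
  set B' : ℝ × ℝ → (ℝ × ℝ) →L[ℝ] (ℝ × ℝ) := fun p =>
    LinearMap.toContinuousLinearMap (Matrix.toLin (Module.Basis.finTwoProd ℝ) (Module.Basis.finTwoProd ℝ)
      !![Real.cos p.2, -p.1 * Real.sin p.2; Real.sin p.2, p.1 * Real.cos p.2]) with hB'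
  have hder : ∀ p ∈ s, HasFDerivWithinAt polarCoord.symm (B' p) s p := fun p _ =>
    (hasFDerivAt_polarCoord_symm p).hasFDerivWithinAt
  have hdet : ∀ p : ℝ × ℝ, (B' p).det = p.1 := by
    intro p
    conv_rhs => rw [← one_mul p.1, ← cos_sq_add_sin_sq p.2]
    simp only [hB', neg_mul, LinearMap.det_toContinuousLinearMap, LinearMap.det_toLin,
      Matrix.det_fin_two_of, sub_neg_eq_add]
    ring
  have hinj : InjOn polarCoord.symm s := by
    intro p hp q hq hpq
    exact bTm_injOn hρpos hh2 hp hq (by rw [← e_symm_polar, ← e_symm_polar, hpq])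
  have jac := lintegral_image_eq_lintegral_abs_det_fderiv_mul volume hs hder hinj
    (fun q => d (Complex.measurableEquivRealProd.symm q))
  have emb := (Complex.volume_preserving_equiv_real_prod.symm).setLIntegral_comp_emb
    Complex.measurableEquivRealProd.symm.measurableEmbedding d (polarCoord.symm '' s)
  have him : Complex.measurableEquivRealProd.symm '' (polarCoord.symm '' s) = bTm '' s := by
    rw [← image_comp]
    exact image_congr fun p _ => e_symm_polar p
  have hsub : bTm '' s ⊆ carlesonBox a h := by
    have hbox : carlesonBox a h = bTm '' (Ioo (1 - h / (2*π)) 1 ×ˢ Icc a (a + h)) := rfl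
    rw [hbox]
    exact image_mono (prod_mono (Ioo_subset_Ioo h2 le_rfl) Ico_subset_Icc_self)
  have hball : bTm '' s ⊆ Metric.ball (0:ℂ) 1 := by
    rintro z ⟨p, hp, rfl⟩
    exact bTm_mem_ball (by rw [abs_of_pos (lt_trans hρpos hp.1.1)]; exact hp.1.2)
  have hs' : MeasurableSet (polarCoord.symm '' s) :=
    measurable_image_of_fderivWithin hs hder hinj
  have hmi : MeasurableSet (bTm '' s) := by
    rw [← him,
      show Complex.measurableEquivRealProd.symm '' (polarCoord.symm '' s)
          = Complex.measurableEquivRealProd ⁻¹' (polarCoord.symm '' s) from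
        Equiv.image_eq_preimage_symm _ _]
    exact Complex.measurableEquivRealProd.measurable hs'
  have hmeasim : gradMeasure F (bTm '' s) = ∫⁻ z in bTm '' s, d z := by
    rw [gradMeasure, withDensity_apply _ hmi, Measure.restrict_restrict hmi,
      inter_eq_self_of_subset_left hball]
  calc ∫⁻ p in s, d (bTm p)
      ≤ ∫⁻ p in s, (2 * ENNReal.ofReal |p.1|) * d (bTm p) := by
        refine setLIntegral_mono ((measurable_const.mul
          (measurable_fst.abs.ennreal_ofReal)).mul (hdm.comp cont_bTm.measurable)) ?_
        intro p hp
        have h12 : (1:ℝ≥0∞) ≤ 2 * ENNReal.ofReal |p.1| := by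
          have : ENNReal.ofReal (1/2 : ℝ) ≤ ENNReal.ofReal |p.1| :=
            ENNReal.ofReal_le_ofReal (le_trans (le_trans h1 hp.1.1.le) (le_abs_self _))
          calc (1:ℝ≥0∞) = 2 * ENNReal.ofReal (1/2 : ℝ) := by
                rw [ENNReal.ofReal_div_of_pos (by norm_num), ENNReal.ofReal_one,
                  ENNReal.ofReal_ofNat, ENNReal.mul_div_cancel' (by norm_num) (by norm_num)]
            _ ≤ 2 * ENNReal.ofReal |p.1| := by gcongr
        calc d (bTm p) = 1 * d (bTm p) := (one_mul _).symm
          _ ≤ (2 * ENNReal.ofReal |p.1|) * d (bTm p) := mul_le_mul_left h12 _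
    _ = 2 * ∫⁻ p in s, ENNReal.ofReal |p.1| * d (bTm p) := by
        simp_rw [mul_assoc]
        exact lintegral_const_mul' 2 _ (by norm_num)
    _ = 2 * ∫⁻ p in s, ENNReal.ofReal |(B' p).det|
          * d (Complex.measurableEquivRealProd.symm (polarCoord.symm p)) := by
        congr 1
        refine setLIntegral_congr_fun hs (fun p _ => ?_)
        rw [hdet, e_symm_polar]
    _ = 2 * ∫⁻ q in polarCoord.symm '' s,
          d (Complex.measurableEquivRealProd.symm q) := by rw [jac]
    _ = 2 * ∫⁻ z in Complex.measurableEquivRealProd.symm '' (polarCoord.symm '' s), d z := by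
        rw [emb]
    _ = 2 * gradMeasure F (bTm '' s) := by rw [him, hmeasim]
    _ ≤ 2 * gradMeasure F (carlesonBox a h) :=
        mul_le_mul_right (measure_mono hsub) 2

lemma hasDerivAt_angular (F : ℂ → ℝ) (hF : ContDiffOn ℝ 1 F (Metric.ball (0:ℂ) 1))
    {ρ : ℝ} (hρ : |ρ| < 1) (t : ℝ) :
    HasDerivAt (fun t => F (bTm (ρ, t)))
      (fderiv ℝ F (bTm (ρ, t)) (bTm (ρ, t) * Complex.I)) t := by
  have hz : bTm (ρ, t) ∈ Metric.ball (0:ℂ) 1 := bTm_mem_ball hρ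
  have hdF : DifferentiableAt ℝ F (bTm (ρ, t)) :=
    (hF.differentiableOn one_ne_zero).differentiableAt (Metric.isOpen_ball.mem_nhds hz)
  have h1 : HasDerivAt (fun t : ℝ => ((t:ℂ) * Complex.I)) Complex.I t := by
    simpa using (Complex.ofRealCLM.hasDerivAt (x := t)).mul_const Complex.I
  have h2 : HasDerivAt (fun t : ℝ => Complex.exp ((t:ℂ) * Complex.I))
      (Complex.exp ((t:ℂ) * Complex.I) * Complex.I) t := by simpa using h1.cexp
  have h3 : HasDerivAt (fun t : ℝ => (ρ:ℂ) * Complex.exp ((t:ℂ) * Complex.I))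
      ((ρ:ℂ) * (Complex.exp ((t:ℂ) * Complex.I) * Complex.I)) t := h2.const_mul _
  have h4 := hdF.hasFDerivAt.comp_hasDerivAt t h3
  simpa [bTm, mul_assoc, Function.comp_def] using h4

lemma hasDerivAt_radial (F : ℂ → ℝ) (hF : ContDiffOn ℝ 1 F (Metric.ball (0:ℂ) 1))
    {r : ℝ} (hr : |r| < 1) (θ : ℝ) :
    HasDerivAt (fun r => F (bTm (r, θ)))
      (fderiv ℝ F (bTm (r, θ)) (Complex.exp ((θ:ℂ) * Complex.I))) r := by
  have hz : bTm (r, θ) ∈ Metric.ball (0:ℂ) 1 := bTm_mem_ball hr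
  have hdF : DifferentiableAt ℝ F (bTm (r, θ)) :=
    (hF.differentiableOn one_ne_zero).differentiableAt (Metric.isOpen_ball.mem_nhds hz)
  have h1 : HasDerivAt (fun r : ℝ => ((r:ℂ) * Complex.exp ((θ:ℂ) * Complex.I)))
      (Complex.exp ((θ:ℂ) * Complex.I)) r := by
    simpa using (Complex.ofRealCLM.hasDerivAt (x := r)).mul_const (Complex.exp ((θ:ℂ) * Complex.I))
  have h4 := hdF.hasFDerivAt.comp_hasDerivAt r h1
  simpa [bTm, Function.comp_def] using h4

lemma contOn_fderiv (F : ℂ → ℝ) (hF : ContDiffOn ℝ 1 F (Metric.ball (0:ℂ) 1)) :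
    ContinuousOn (fderiv ℝ F) (Metric.ball (0:ℂ) 1) :=
  hF.continuousOn_fderiv_of_isOpen Metric.isOpen_ball le_rfl

lemma cont_fderiv_angular (F : ℂ → ℝ) (hF : ContDiffOn ℝ 1 F (Metric.ball (0:ℂ) 1))
    {ρ : ℝ} (hρ : |ρ| < 1) :
    Continuous fun t : ℝ => fderiv ℝ F (bTm (ρ, t)) :=
  (contOn_fderiv F hF).comp_continuous
    (cont_bTm.comp (Continuous.prodMk_right ρ)) (fun t => bTm_mem_ball hρ)

lemma cont_g_angular (F : ℂ → ℝ) (hF : ContDiffOn ℝ 1 F (Metric.ball (0:ℂ) 1))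
    {ρ : ℝ} (hρ : |ρ| < 1) :
    Continuous fun t : ℝ => ‖fderiv ℝ F (bTm (ρ, t))‖ :=
  (cont_fderiv_angular F hF hρ).norm

lemma contOn_fderiv_radial (F : ℂ → ℝ) (hF : ContDiffOn ℝ 1 F (Metric.ball (0:ℂ) 1))
    (θ : ℝ) :
    ContinuousOn (fun r : ℝ => fderiv ℝ F (bTm (r, θ))) (Ioo (-1:ℝ) 1) := by
  refine (contOn_fderiv F hF).comp
    (cont_bTm.comp (continuous_id.prodMk continuous_const)).continuousOn ?_
  intro r hr
  exact bTm_mem_ball (abs_lt.2 ⟨hr.1, hr.2⟩)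

lemma angle_osc (F : ℂ → ℝ) (hF : ContDiffOn ℝ 1 F (Metric.ball (0:ℂ) 1))
    {ρ a h θ : ℝ} (hρ0 : 0 ≤ ρ) (hρ1 : ρ < 1) (hθ : θ ∈ Icc a (a + h)) :
    |F (bTm (ρ, θ)) - F (bTm (ρ, a))| ≤ ∫ t in a..(a + h), ‖fderiv ℝ F (bTm (ρ, t))‖ := by
  have hρ' : |ρ| < 1 := by rwa [abs_of_nonneg hρ0]
  set g : ℝ → ℝ := fun t => ‖fderiv ℝ F (bTm (ρ, t))‖ with hg
  have hgc : Continuous g := cont_g_angular F hF hρ'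
  set φ' : ℝ → ℝ := fun t => fderiv ℝ F (bTm (ρ, t)) (bTm (ρ, t) * Complex.I) with hφ'
  have hφc : Continuous φ' := by
    exact isBoundedBilinearMap_apply.continuous.comp
      ((cont_fderiv_angular F hF hρ').prodMk
        ((cont_bTm.comp (Continuous.prodMk_right ρ)).mul continuous_const))
  have key : ∀ t : ℝ, HasDerivAt (fun t => F (bTm (ρ, t))) (φ' t) t := fun t =>
    hasDerivAt_angular F hF hρ' t
  have ftc : F (bTm (ρ, θ)) - F (bTm (ρ, a)) = ∫ t in a..θ, φ' t :=
    (intervalIntegral.integral_eq_sub_of_hasDerivAt (fun t _ => key t)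
      (hφc.intervalIntegrable a θ)).symm
  have hbd : ∀ t : ℝ, |φ' t| ≤ g t := by
    intro t
    have h1 : |φ' t| = ‖fderiv ℝ F (bTm (ρ, t)) (bTm (ρ, t) * Complex.I)‖ := rfl
    rw [h1]
    calc ‖fderiv ℝ F (bTm (ρ, t)) (bTm (ρ, t) * Complex.I)‖
        ≤ ‖fderiv ℝ F (bTm (ρ, t))‖ * ‖bTm (ρ, t) * Complex.I‖ :=
          (fderiv ℝ F (bTm (ρ, t))).le_opNorm _
      _ ≤ g t * 1 := by
          refine mul_le_mul_of_nonneg_left ?_ (norm_nonneg _)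
          rw [norm_mul, Complex.norm_I, bTm_abs]
          simpa using hρ'.le
      _ = g t := mul_one _
  rw [ftc]
  calc |∫ t in a..θ, φ' t| ≤ ∫ t in a..θ, |φ' t| :=
        intervalIntegral.abs_integral_le_integral_abs hθ.1
    _ ≤ ∫ t in a..θ, g t :=
        intervalIntegral.integral_mono_on hθ.1 (hφc.abs.intervalIntegrable _ _)
          (hgc.intervalIntegrable _ _) (fun t _ => hbd t)
    _ ≤ ∫ t in a..(a + h), g t :=
        intervalIntegral.integral_mono_interval le_rfl hθ.1 hθ.2
          (ae_of_all _ fun t => norm_nonneg _) (hgc.intervalIntegrable _ _)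

lemma osc_le_two_avg (f : ℝ → ℝ) (a h c : ℝ) (hh : 0 < h)
    (hf : IntervalIntegrable f volume a (a + h)) :
    circOsc f a h ≤ 2 / h * ∫ θ in a..(a + h), |f θ - c| := by
  have hab : a ≤ a + h := by linarith
  have hfc : IntervalIntegrable (fun θ => f θ - c) volume a (a + h) :=
    hf.sub intervalIntegrable_const
  have hfc' : IntervalIntegrable (fun θ => |f θ - c|) volume a (a + h) := hfc.abs
  set A := circAvg f a h with hA
  set J := ∫ θ in a..(a + h), |f θ - c| with hJ
  have hJ0 : 0 ≤ J := intervalIntegral.integral_nonneg hab (fun u _ => abs_nonneg _)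
  have hAc : |A - c| ≤ J / h := by
    have h1 : A - c = (∫ θ in a..(a + h), (f θ - c)) / h := by
      rw [hA, circAvg, intervalIntegral.integral_sub hf intervalIntegrable_const,
        intervalIntegral.integral_const]
      field_simp
      simp
    rw [h1, abs_div, abs_of_pos hh]
    gcongr
    exact intervalIntegral.abs_integral_le_integral_abs hab
  have hint : ∫ θ in a..(a + h), |f θ - A| ≤ J + h * |A - c| := by
    have h2 : ∀ θ, |f θ - A| ≤ |f θ - c| + |A - c| := by
      intro θ
      calc |f θ - A| = |(f θ - c) - (A - c)| := by ring_nf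
        _ ≤ |f θ - c| + |A - c| := abs_sub _ _
    calc ∫ θ in a..(a + h), |f θ - A|
        ≤ ∫ θ in a..(a + h), (|f θ - c| + |A - c|) :=
          intervalIntegral.integral_mono_on hab ((hf.sub intervalIntegrable_const).abs)
            (hfc'.add intervalIntegrable_const) (fun θ _ => h2 θ)
      _ = J + h * |A - c| := by
          rw [intervalIntegral.integral_add hfc' intervalIntegrable_const,
            intervalIntegral.integral_const]
          simp [smul_eq_mul, hJ]
  have h3 : ∫ θ in a..(a + h), |f θ - A| ≤ 2 * J := by
    have := mul_le_mul_of_nonneg_left hAc (le_of_lt hh)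
    calc ∫ θ in a..(a + h), |f θ - A| ≤ J + h * |A - c| := hint
      _ ≤ J + h * (J / h) := by nlinarith
      _ = 2 * J := by field_simp; ring
  rw [circOsc]
  rw [div_le_iff₀ hh]
  calc ∫ θ in a..(a + h), |f θ - circAvg f a h| ≤ 2 * J := h3
    _ = 2 / h * J * h := by field_simp

lemma master_core (F : ℂ → ℝ) (f : ℝ → ℝ)
    (hF : ContDiffOn ℝ 1 F (Metric.ball (0 : ℂ) 1))
    (hlim : ∀ᵐ θ : ℝ, Tendsto (fun r : ℝ => F ((r : ℂ) * Complex.exp ((θ : ℂ) * Complex.I)))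
      (nhdsWithin 1 (Set.Iio 1)) (nhds (f θ)))
    (hfm : AEMeasurable f)
    {a h B η : ℝ} (hh : 0 < h) (hh2 : h ≤ 2 * π) (hB : 0 ≤ B) (hη : 0 < η)
    (hμ : gradMeasure F (carlesonBox a h) ≤ ENNReal.ofReal (B * h)) :
    IntervalIntegrable f volume a (a + h) ∧
      circOsc f a h ≤ 4 * B + 16 * π * B + 2 * η := by
  have hπ := Real.pi_pos
  set ρ₁ := max (1 - h / (2 * π)) (1/2 : ℝ) with hρ₁def
  have h1 : (1:ℝ)/2 ≤ ρ₁ := le_max_right _ _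
  have h2 : 1 - h / (2 * π) ≤ ρ₁ := le_max_left _ _
  have h3 : ρ₁ < 1 := by
    apply max_lt _ (by norm_num)
    have : 0 < h / (2 * π) := div_pos hh (by linarith)
    linarith
  have h4 : h / (4 * π) ≤ 1 - ρ₁ := by
    have e1 : h / (4 * π) ≤ h / (2 * π) :=
      div_le_div_of_nonneg_left hh.le (by linarith) (by linarith)
    have e2 : h / (4 * π) ≤ 1/2 := by
      rw [div_le_iff₀ (by linarith)]; linarith
    have := max_le (by linarith : 1 - h / (2 * π) ≤ 1 - h / (4 * π))
      (by linarith : (1:ℝ)/2 ≤ 1 - h / (4 * π))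
    linarith
  have hρpos : (0:ℝ) < ρ₁ := by linarith
  set g2 : ℝ × ℝ → ℝ≥0∞ := fun p => ENNReal.ofReal ‖fderiv ℝ F (bTm p)‖ with hg2def
  have hg2m : Measurable g2 := (meas_d F).comp cont_bTm.measurable
  have hJ : ∫⁻ p in Ioo ρ₁ 1 ×ˢ Ico a (a + h), g2 p ≤ ENNReal.ofReal (2 * (B * h)) := by
    refine le_trans (lintegral_rect_le F h1 h2 h3 hh2) ?_
    calc 2 * gradMeasure F (carlesonBox a h) ≤ 2 * ENNReal.ofReal (B * h) := by gcongr
      _ = ENNReal.ofReal (2 * (B * h)) := by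
          rw [ENNReal.ofReal_mul (by norm_num : (0:ℝ) ≤ 2), ENNReal.ofReal_ofNat]
  have hrs : (volume : Measure (ℝ × ℝ)).restrict (Ioo ρ₁ 1 ×ˢ Ico a (a + h))
      = (volume.restrict (Ioo ρ₁ 1)).prod (volume.restrict (Ico a (a + h))) := by
    rw [Measure.volume_eq_prod, ← Measure.prod_restrict]
  set Gl : ℝ → ℝ≥0∞ := fun θ => ∫⁻ r in Ioo ρ₁ 1, g2 (r, θ) with hGldef
  set Hl : ℝ → ℝ≥0∞ := fun r => ∫⁻ t in Ico a (a + h), g2 (r, t) with hHldef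
  have hGlm : Measurable Gl := hg2m.lintegral_prod_left'
  have hHlm : Measurable Hl := hg2m.lintegral_prod_right'
  have hGint : ∫⁻ θ in Ico a (a + h), Gl θ ≤ ENNReal.ofReal (2 * (B * h)) := by
    rw [hrs] at hJ
    rwa [lintegral_prod_symm _ (hg2m.aemeasurable)] at hJ
  have hHint : ∫⁻ r in Ioo ρ₁ 1, Hl r ≤ ENNReal.ofReal (2 * (B * h)) := by
    rw [hrs] at hJ
    rwa [lintegral_prod _ (hg2m.aemeasurable)] at hJ
  -- choose a good radius ρ
  have hexists : ∃ ρ ∈ Ioo ρ₁ 1, Hl ρ ≤ ENNReal.ofReal (8 * π * B + η) := by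
    by_contra hcon
    push_neg at hcon
    have hlow : ENNReal.ofReal (8 * π * B + η) * volume (Ioo ρ₁ 1)
        ≤ ∫⁻ r in Ioo ρ₁ 1, Hl r := by
      rw [← setLIntegral_const]
      exact setLIntegral_mono hHlm fun ρ hρ => (hcon ρ hρ).le
    rw [Real.volume_Ioo, ← ENNReal.ofReal_mul (by positivity)] at hlow
    have hc := le_trans hlow hHint
    rw [ENNReal.ofReal_le_ofReal_iff (by positivity)] at hc
    have h5 : (0:ℝ) < 1 - ρ₁ := by linarith
    have h6 : 8 * π * B * (h / (4 * π)) = 2 * (B * h) := by field_simp; ring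
    nlinarith [mul_le_mul_of_nonneg_left h4 (by positivity : (0:ℝ) ≤ 8 * π * B)]
  obtain ⟨ρ, hρmem, hHρ⟩ := hexists
  have hρlt1 : ρ < 1 := hρmem.2
  have hρgt : ρ₁ < ρ := hρmem.1
  have hρ0 : (0:ℝ) ≤ ρ := by linarith
  have hρabs : |ρ| < 1 := by rwa [abs_of_nonneg hρ0]
  set gρ : ℝ → ℝ := fun t => ‖fderiv ℝ F (bTm (ρ, t))‖ with hgρdef
  have hgρc : Continuous gρ := cont_g_angular F hF hρabs
  set K := ∫ t in a..(a + h), gρ t with hKdef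
  have hab : a ≤ a + h := by linarith
  have hKof : ENNReal.ofReal K = Hl ρ := by
    rw [hKdef, intervalIntegral.integral_of_le hab,
      ofReal_integral_eq_lintegral_ofReal (hgρc.integrableOn_Ioc)
        (ae_of_all _ fun t => norm_nonneg _),
      ← Measure.restrict_congr_set Ico_ae_eq_Ioc]
  have hKle : K ≤ 8 * π * B + η := by
    rw [← ENNReal.ofReal_le_ofReal_iff (by positivity), hKof]
    exact hHρ
  have hK0 : 0 ≤ K := intervalIntegral.integral_nonneg hab (fun u _ => norm_nonneg _)
  have hIoc_eq : (volume : Measure ℝ).restrict (Ico a (a + h))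
      = volume.restrict (Ioc a (a + h)) := Measure.restrict_congr_set Ico_ae_eq_Ioc
  have hGint' : ∫⁻ θ in Ioc a (a + h), Gl θ ≤ ENNReal.ofReal (2 * (B * h)) := by
    rwa [← hIoc_eq]
  have hGlfin : ∀ᵐ θ ∂(volume.restrict (Ioc a (a + h))), Gl θ < ⊤ :=
    ae_lt_top hGlm (lt_of_le_of_lt hGint' ENNReal.ofReal_lt_top).ne
  have hlim' : ∀ᵐ (θ : ℝ) ∂(volume.restrict (Ioc a (a + h))),
      Tendsto (fun r : ℝ => F ((r : ℂ) * Complex.exp ((θ : ℂ) * Complex.I)))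
        (nhdsWithin 1 (Set.Iio 1)) (nhds (f θ)) := ae_restrict_of_ae hlim
  set c := F (bTm (ρ, a)) with hcdef
  have hbd : ∀ᵐ θ ∂(volume.restrict (Ioc a (a + h))),
      |f θ - c| ≤ (Gl θ).toReal + K := by
    filter_upwards [hGlfin, hlim', ae_restrict_mem measurableSet_Ioc] with θ hGθ hlθ hθmem
    have e1 : |F (bTm (ρ, θ)) - c| ≤ K :=
      angle_osc F hF hρ0 hρlt1 (Ioc_subset_Icc_self hθmem)
    have e2 : |f θ - F (bTm (ρ, θ))| ≤ (Gl θ).toReal := by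
      have key : ∀ r' ∈ Ioo ρ 1, |F (bTm (r', θ)) - F (bTm (ρ, θ))| ≤ (Gl θ).toReal := by
        intro r' hr'
        have hρr' : ρ ≤ r' := hr'.1.le
        have hIccsub : Icc ρ r' ⊆ Ioo (-1:ℝ) 1 := fun x hx =>
          ⟨by linarith [hx.1], lt_of_le_of_lt hx.2 hr'.2⟩
        set ψ' : ℝ → ℝ := fun s => fderiv ℝ F (bTm (s, θ)) (Complex.exp ((θ:ℂ) * Complex.I))
          with hψ'def
        have hψcont : ContinuousOn ψ' (Ioo (-1:ℝ) 1) := by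
          exact (isBoundedBilinearMap_apply (𝕜 := ℝ) (E := ℂ) (F := ℝ)).continuous.comp_continuousOn
            ((contOn_fderiv_radial F hF θ).prodMk continuousOn_const)
        have hgθcont : ContinuousOn (fun s : ℝ => ‖fderiv ℝ F (bTm (s, θ))‖)
            (Ioo (-1:ℝ) 1) := (contOn_fderiv_radial F hF θ).norm
        have huIcc : uIcc ρ r' = Icc ρ r' := uIcc_of_le hρr'
        have hftc : F (bTm (r', θ)) - F (bTm (ρ, θ)) = ∫ s in ρ..r', ψ' s := by
          refine (intervalIntegral.integral_eq_sub_of_hasDerivAt (f := fun s => F (bTm (s, θ)))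
            (f' := ψ') (fun s hs => ?_) ?_).symm
          · rw [huIcc] at hs
            have := hIccsub hs
            exact hasDerivAt_radial F hF (abs_lt.2 ⟨this.1, this.2⟩) θ
          · exact (hψcont.mono (huIcc ▸ hIccsub)).intervalIntegrable
        have hbd' : ∀ s ∈ Icc ρ r', |ψ' s| ≤ ‖fderiv ℝ F (bTm (s, θ))‖ := by
          intro s _
          calc |ψ' s| ≤ ‖fderiv ℝ F (bTm (s, θ))‖ * ‖Complex.exp ((θ:ℂ) * Complex.I)‖ :=
                (fderiv ℝ F (bTm (s, θ))).le_opNorm _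
            _ = ‖fderiv ℝ F (bTm (s, θ))‖ := by
                rw [Complex.norm_exp_ofReal_mul_I, mul_one]
        have h6 : |F (bTm (r', θ)) - F (bTm (ρ, θ))|
            ≤ ∫ s in ρ..r', ‖fderiv ℝ F (bTm (s, θ))‖ := by
          rw [hftc]
          calc |∫ s in ρ..r', ψ' s| ≤ ∫ s in ρ..r', |ψ' s| :=
                intervalIntegral.abs_integral_le_integral_abs hρr'
            _ ≤ ∫ s in ρ..r', ‖fderiv ℝ F (bTm (s, θ))‖ :=
                intervalIntegral.integral_mono_on hρr'
                  ((hψcont.mono (huIcc ▸ hIccsub)).intervalIntegrable).abs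
                  ((hgθcont.mono (huIcc ▸ hIccsub)).intervalIntegrable)
                  (fun s hs => hbd' s hs)
        have hIocsub : Ioc ρ r' ⊆ Ioo ρ₁ 1 := fun s hs =>
          ⟨hρgt.trans hs.1, lt_of_le_of_lt hs.2 hr'.2⟩
        have hgint : IntegrableOn (fun s : ℝ => ‖fderiv ℝ F (bTm (s, θ))‖) (Ioc ρ r') volume :=
          ((hgθcont.mono hIccsub).integrableOn_Icc).mono_set Ioc_subset_Icc_self
        have h7 : ∫ s in ρ..r', ‖fderiv ℝ F (bTm (s, θ))‖ ≤ (Gl θ).toReal := by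
          rw [intervalIntegral.integral_of_le hρr']
          refine (ENNReal.ofReal_le_iff_le_toReal hGθ.ne).1 ?_
          rw [ofReal_integral_eq_lintegral_ofReal hgint (ae_of_all _ fun s => norm_nonneg _)]
          exact lintegral_mono_set hIocsub
        linarith
      have htt : Tendsto (fun r' : ℝ => |F (bTm (r', θ)) - F (bTm (ρ, θ))|)
          (nhdsWithin 1 (Set.Iio 1)) (nhds |f θ - F (bTm (ρ, θ))|) := by
        have h8 : Tendsto (fun r' : ℝ => F (bTm (r', θ)))
            (nhdsWithin 1 (Set.Iio 1)) (nhds (f θ)) := hlθ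
        exact (h8.sub tendsto_const_nhds).abs
      refine le_of_tendsto htt ?_
      filter_upwards [Ioo_mem_nhdsLT_of_mem (⟨hρlt1, le_rfl⟩ : (1:ℝ) ∈ Ioc ρ 1)] with r' hr'
      exact key r' hr'
    calc |f θ - c| ≤ |f θ - F (bTm (ρ, θ))| + |F (bTm (ρ, θ)) - c| := abs_sub_le _ _ _
      _ ≤ (Gl θ).toReal + K := add_le_add e2 e1
  have hGlae : AEMeasurable Gl (volume.restrict (Ioc a (a + h))) := hGlm.aemeasurable
  have hMint : IntegrableOn (fun θ => (Gl θ).toReal) (Ioc a (a + h)) volume := by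
    refine ⟨(hGlm.ennreal_toReal).aestronglyMeasurable, ?_⟩
    rw [hasFiniteIntegral_iff_ofReal (ae_of_all _ fun θ => ENNReal.toReal_nonneg)]
    calc ∫⁻ θ in Ioc a (a + h), ENNReal.ofReal (Gl θ).toReal
        ≤ ∫⁻ θ in Ioc a (a + h), Gl θ := lintegral_mono fun θ => ENNReal.ofReal_toReal_le
      _ ≤ ENNReal.ofReal (2 * (B * h)) := hGint'
      _ < ⊤ := ENNReal.ofReal_lt_top
  have hvol : volume (Ioc a (a + h)) < ⊤ := measure_Ioc_lt_top
  have hMint2 : IntegrableOn (fun θ => (Gl θ).toReal + K) (Ioc a (a + h)) volume :=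
    hMint.add (integrableOn_const hvol.ne)
  have hfsm : AEStronglyMeasurable f (volume.restrict (Ioc a (a + h))) :=
    (hfm.restrict).aestronglyMeasurable
  have habs_int : IntegrableOn (fun θ => |f θ - c|) (Ioc a (a + h)) volume := by
    have h9 : (fun θ => |f θ - c|) = fun θ => ‖f θ - c‖ :=
      funext fun θ => (Real.norm_eq_abs _).symm
    rw [h9]
    refine Integrable.mono' hMint2 (hfsm.sub aestronglyMeasurable_const).norm ?_
    filter_upwards [hbd] with θ hθ
    rw [norm_norm, Real.norm_eq_abs]
    exact hθ
  have hf_int : IntegrableOn f (Ioc a (a + h)) volume := by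
    have h10 : IntegrableOn (fun θ => (f θ - c) + c) (Ioc a (a + h)) volume := by
      refine Integrable.add ?_ (integrableOn_const hvol.ne)
      refine Integrable.mono' habs_int (hfsm.sub aestronglyMeasurable_const) ?_
      exact ae_of_all _ fun θ => le_of_eq (Real.norm_eq_abs _)
    simpa using h10
  have hfint : IntervalIntegrable f volume a (a + h) :=
    (intervalIntegrable_iff_integrableOn_Ioc_of_le hab).2 hf_int
  refine ⟨hfint, ?_⟩
  have hint1 : ∫ θ in a..(a + h), |f θ - c| ≤ 2 * (B * h) + h * K := by
    rw [intervalIntegral.integral_of_le hab]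
    have step1 : ∫ θ in Ioc a (a + h), |f θ - c|
        ≤ ∫ θ in Ioc a (a + h), ((Gl θ).toReal + K) :=
      integral_mono_ae habs_int hMint2 hbd
    have step2 : ∫ θ in Ioc a (a + h), ((Gl θ).toReal + K)
        = (∫ θ in Ioc a (a + h), (Gl θ).toReal)
          + (volume (Ioc a (a + h))).toReal * K := by
      rw [integral_add hMint (integrableOn_const hvol.ne), setIntegral_const,
        smul_eq_mul]
      rfl
    have step3 : ∫ θ in Ioc a (a + h), (Gl θ).toReal ≤ 2 * (B * h) := by
      rw [integral_toReal hGlae hGlfin]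
      calc (∫⁻ θ in Ioc a (a + h), Gl θ).toReal
          ≤ (ENNReal.ofReal (2 * (B * h))).toReal :=
            ENNReal.toReal_mono ENNReal.ofReal_ne_top hGint'
        _ = 2 * (B * h) := ENNReal.toReal_ofReal (by positivity)
    have step4 : (volume (Ioc a (a + h))).toReal = h := by
      rw [Real.volume_Ioc, ENNReal.toReal_ofReal (by linarith)]; ring
    calc ∫ θ in Ioc a (a + h), |f θ - c| ≤ _ := step1
      _ = (∫ θ in Ioc a (a + h), (Gl θ).toReal)
          + (volume (Ioc a (a + h))).toReal * K := step2
      _ ≤ 2 * (B * h) + h * K := by rw [step4]; linarith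
  have hosc := osc_le_two_avg f a h c hh hfint
  have h9 : 2 / h * (2 * (B * h) + h * K) = 4 * B + 2 * K := by field_simp; ring
  calc circOsc f a h ≤ 2 / h * ∫ θ in a..(a + h), |f θ - c| := hosc
    _ ≤ 2 / h * (2 * (B * h) + h * K) :=
        mul_le_mul_of_nonneg_left hint1 (by positivity)
    _ = 4 * B + 2 * K := h9
    _ ≤ 4 * B + 16 * π * B + 2 * η := by linarith

lemma f_aemeasurable (F : ℂ → ℝ) (f : ℝ → ℝ)
    (hF : ContDiffOn ℝ 1 F (Metric.ball (0 : ℂ) 1))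
    (hlim : ∀ᵐ θ : ℝ, Tendsto (fun r : ℝ => F ((r : ℂ) * Complex.exp ((θ : ℂ) * Complex.I)))
      (nhdsWithin 1 (Set.Iio 1)) (nhds (f θ))) : AEMeasurable f := by
  set u : ℕ → ℝ := fun n => 1 - 1/(n+1) with hu
  have hupos : ∀ n : ℕ, 0 < 1/((n:ℝ)+1) := fun n => by positivity
  have hule : ∀ n : ℕ, 1/((n:ℝ)+1) ≤ 1 := fun n => by
    rw [div_le_one (by positivity)]; linarith
  have hu1 : Tendsto u atTop (nhds 1) := by
    have h0 := tendsto_one_div_add_atTop_nhds_zero_nat (𝕜 := ℝ)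
    have := (tendsto_const_nhds (x := (1:ℝ)) (f := atTop)).sub h0
    simpa [hu] using this
  have humem : ∀ n, u n ∈ Iio (1:ℝ) := fun n => by
    simp only [hu, mem_Iio]; linarith [hupos n]
  have hu2 : Tendsto u atTop (nhdsWithin 1 (Iio 1)) :=
    tendsto_nhdsWithin_of_tendsto_nhds_of_eventually_within u hu1
      (Eventually.of_forall humem)
  have hun : ∀ n, |u n| < 1 := fun n => by
    rw [abs_lt]; constructor
    · simp only [hu]; linarith [hule n]
    · exact humem n
  have hcont : ∀ n, Continuous fun θ : ℝ => F (bTm (u n, θ)) := fun n =>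
    hF.continuousOn.comp_continuous (cont_bTm.comp (Continuous.prodMk_right (u n)))
      (fun θ => bTm_mem_ball (hun n))
  have hseq : ∀ᵐ θ : ℝ, Tendsto (fun n => F (bTm (u n, θ))) atTop (nhds (f θ)) := by
    filter_upwards [hlim] with θ hθ
    exact hθ.comp hu2
  exact aemeasurable_of_tendsto_metrizable_ae atTop
    (fun n => (hcont n).measurable.aemeasurable) hseq

/-- If `F ∈ C¹(Δ)` is such that `|∇F| dxdy` is a vanishing Carleson measure on the disk and
`F(re^{iθ})` converges as `r → 1⁻` for a.e. `θ` to `f(e^{iθ})`, then `f ∈ VMO(𝕊)`. -/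
theorem boundary_limit_mem_vmo (F : ℂ → ℝ) (f : ℝ → ℝ)
    (hF : ContDiffOn ℝ 1 F (Metric.ball (0 : ℂ) 1))
    (hcarl : IsVanishingCarleson (gradMeasure F))
    (hper : Function.Periodic f (2 * π))
    (hlim : ∀ᵐ θ : ℝ, Tendsto (fun r : ℝ => F ((r : ℂ) * Complex.exp ((θ : ℂ) * Complex.I)))
      (nhdsWithin 1 (Set.Iio 1)) (nhds (f θ))) :
    IsVMOS f := by
  have hπ := Real.pi_pos
  have hfm : AEMeasurable f := f_aemeasurable F f hF hlim
  obtain ⟨⟨A, hA⟩, hvan⟩ := hcarl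
  set A' := max A 0 with hA'def
  have hA'0 : (0:ℝ) ≤ A' := le_max_right _ _
  have hA'bound : ∀ a h : ℝ, 0 < h → h ≤ 2*π →
      gradMeasure F (carlesonBox a h) ≤ ENNReal.ofReal (A' * h) := fun a h hh hh2 =>
    le_trans (hA a h hh hh2)
      (ENNReal.ofReal_le_ofReal (by nlinarith [le_max_left A (0:ℝ)]))
  have master : ∀ (a h B : ℝ), 0 < h → h ≤ 2*π → 0 ≤ B →
      gradMeasure F (carlesonBox a h) ≤ ENNReal.ofReal (B*h) →
      IntervalIntegrable f volume a (a+h) ∧ circOsc f a h ≤ (4 + 16*π) * B := by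
    intro a h B hh hh2 hB hμ
    refine ⟨(master_core F f hF hlim hfm hh hh2 hB one_pos hμ).1, ?_⟩
    refine le_of_forall_pos_le_add fun ε hε => ?_
    have h1 := (master_core F f hF hlim hfm hh hh2 hB (half_pos hε) hμ).2
    calc circOsc f a h ≤ 4*B + 16*π*B + 2*(ε/2) := h1
      _ = (4 + 16*π)*B + ε := by ring
  constructor
  · refine ⟨hper, ?_, ⟨(4 + 16*π)*A', ?_⟩⟩
    · intro x
      have hIoo : Ioo (x - π) (x + π) ∈ nhds x :=
        Ioo_mem_nhds (by linarith) (by linarith)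
      refine ⟨Ioc (x - π) (x - π + 2*π), ?_, ?_⟩
      · refine mem_of_superset hIoo fun y hy => ?_
        exact ⟨hy.1, by linarith [hy.2]⟩
      · have := (master (x - π) (2*π) A' (by linarith) le_rfl hA'0
          (hA'bound (x - π) (2*π) (by linarith) le_rfl)).1
        exact ((intervalIntegrable_iff_integrableOn_Ioc_of_le (by linarith)).1 this)
    · intro a h hh hh2
      exact (master a h A' hh hh2 hA'0 (hA'bound a h hh hh2)).2
  · intro ε hε
    have hconst : (0:ℝ) < 4 + 16*π := by linarith
    set ε' := ε / (4 + 16*π) with hε'def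
    have hε'pos : 0 < ε' := div_pos hε hconst
    obtain ⟨δ, hδpos, hδ⟩ := hvan ε' hε'pos
    refine ⟨min δ (2*π), lt_min hδpos (by linarith), ?_⟩
    intro a h hh hhle
    have hh2 : h ≤ 2*π := le_trans hhle (min_le_right _ _)
    have hhδ : h ≤ δ := le_trans hhle (min_le_left _ _)
    have h2 := (master a h ε' hh hh2 hε'pos.le (hδ a h hh hhδ)).2
    calc circOsc f a h ≤ (4 + 16*π) * ε' := h2
      _ = ε := by rw [hε'def]; field_simp
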